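/- Suppose real tensors d_i and p_{ijk} satisfy Relations (1)-(4) of the 2D TQFT classification. Then the matrix c_{ij} = Σ_k d_k p_{kij} is a real symmetric idempotent matrix, and hence the torus invariant Σ_i c_{ii} is a non-negative integer (equal to the rank of c). -/

import Mathlib

/-- For real tensors `d`, `p` satisfying Relations (1)-(4), the matrix
`c_{ij} = Σ_k d_k p_{kij}` is a real symmetric idempotent matrix, and the
torus invariant `Σ_i c_{ii}` is a non-negative integer, equal to the rank
of `c`. -/
theorem torus_invariant_nonneg_integer {n : ℕ} (d : Fin n → ℝ)
    (p : Fin n → Fin n → Fin n → ℝ)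
    (h1 : ∀ i j l m, ∑ k, p i j k * p k l m = ∑ k, p i l k * p k j m)
    (h2 : ∀ i j k, p i j k = p j i k ∧ p i j k = p i k j)
    (h3 : ∀ i, ∑ k, ∑ j, d k * p k i j * d j = d i)
    (h4 : ∀ i l m, ∑ k, ∑ j, d k * p k i j * p j l m = p i l m) :
    ∀ c : Matrix (Fin n) (Fin n) ℝ, (∀ i j, c i j = ∑ k, d k * p k i j) →
      c.transpose = c ∧ c * c = c ∧ Matrix.trace c = (c.rank : ℝ) := by
  intro c hc
  have hsymm : c.transpose = c := by
    ext i j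
    simp only [Matrix.transpose_apply, hc]
    refine Finset.sum_congr rfl fun k _ => ?_
    rw [(h2 k j i).2]
  have hidem : c * c = c := by
    ext i j
    simp only [Matrix.mul_apply, hc]
    have hp : ∀ m l, p m l j = p l m j := fun m l => (h2 m l j).1
    calc ∑ l, (∑ k, d k * p k i l) * ∑ m, d m * p m l j
        = ∑ m, d m * ∑ k, ∑ l, d k * p k i l * p l m j := by
          simp_rw [Finset.sum_mul, Finset.mul_sum]
          rw [Finset.sum_comm]
          refine (Finset.sum_congr rfl fun k _ => Finset.sum_comm).trans ?_
          rw [Finset.sum_comm]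
          exact Finset.sum_congr rfl fun m _ => Finset.sum_congr rfl fun k _ =>
            Finset.sum_congr rfl fun l _ => by rw [hp m l]; ring
      _ = ∑ m, d m * p i m j := by
          refine Finset.sum_congr rfl fun m _ => ?_
          rw [h4 i m j]
      _ = ∑ k, d k * p k i j := by
          refine Finset.sum_congr rfl fun m _ => ?_
          rw [(h2 i m j).1]
  refine ⟨hsymm, hidem, ?_⟩
  have hf : c.mulVecLin ∘ₗ c.mulVecLin = c.mulVecLin := by
    rw [← Matrix.mulVecLin_mul, hidem]
  have hproj : LinearMap.IsProj (LinearMap.range c.mulVecLin) c.mulVecLin := by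
    constructor
    · intro x; exact ⟨x, rfl⟩
    · rintro x ⟨y, rfl⟩
      exact congrFun (congrArg DFunLike.coe hf) y
  have := hproj.trace
  rw [Matrix.rank]
  rw [← this]
  rw [LinearMap.trace_eq_matrix_trace ℝ (Pi.basisFun ℝ (Fin n))]
  congr 1
  ext i j
  simp [LinearMap.toMatrix_apply, Matrix.mulVecLin_apply, Matrix.mulVec, dotProduct,
    Pi.basisFun_apply, Pi.single_apply]
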